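/- Let Ω₃ := B(0,1) ∖ {(x,0) : −1 < x < 1} ⊆ ℝ² (the open unit disc with a full diameter removed). Then Ω₃ satisfies the weak local D₀-John condition for some D₀ ≥ 1, but Ω₃ satisfies neither the D₀-John condition nor the local D₀-John condition for any D₀ ≥ 1. -/

import Mathlib

open Set Metric MeasureTheory
open scoped ENNReal NNReal

noncomputable section

/-- Euclidean space `ℝ^m`. -/
abbrev Euc (m : ℕ) : Type := EuclideanSpace ℝ (Fin m)

variable {m : ℕ}

/-- `E ⊆ ℝ^m` is `d`-Ahlfors–David regular: `E` is closed and there is `D ≥ 1` with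
`D⁻¹ rᵈ ≤ ℋᵈ(B(x,r) ∩ E) ≤ D rᵈ` for all `x ∈ E` and `0 < r < diam E`. -/
def IsADR (d : ℝ) (E : Set (Euc m)) : Prop :=
  IsClosed E ∧ ∃ D : ℝ, 1 ≤ D ∧ ∀ x ∈ E, ∀ r : ℝ, 0 < r →
    ENNReal.ofReal r < EMetric.diam E →
      ENNReal.ofReal (r ^ d / D) ≤ μH[d] (ball x r ∩ E) ∧
        μH[d] (ball x r ∩ E) ≤ ENNReal.ofReal (D * r ^ d)

/-- The corkscrew condition for `Ω` with constant `c ∈ (0,1)`: for every `x ∈ ∂Ω` and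
`0 < r < diam ∂Ω` there is `X ∈ Ω` with `B(X, c·r) ⊆ B(x,r) ∩ Ω`. -/
def CorkscrewWith (Ω : Set (Euc m)) (c : ℝ) : Prop :=
  ∀ x ∈ frontier Ω, ∀ r : ℝ, 0 < r → ENNReal.ofReal r < EMetric.diam (frontier Ω) →
    ∃ X ∈ Ω, ball X (c * r) ⊆ ball x r ∩ Ω

/-- The corkscrew condition (for some constant `c ∈ (0,1)`). -/
def Corkscrew (Ω : Set (Euc m)) : Prop := ∃ c : ℝ, 0 < c ∧ c < 1 ∧ CorkscrewWith Ω c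

/-- The 2-sided corkscrew condition: both `Ω` and `int (Ωᶜ)` satisfy the corkscrew condition. -/
def TwoSidedCorkscrew (Ω : Set (Euc m)) : Prop :=
  Corkscrew Ω ∧ Corkscrew (interior Ωᶜ)

/-- The distance between two sets. -/
def distSet (s t : Set (Euc m)) : ℝ := sInf {d : ℝ | ∃ x ∈ s, ∃ y ∈ t, d = dist x y}

/-- A path in `Ω`: a continuous map `γ : [0,1] → closure Ω` with `γ(t) ∈ Ω` for `t ∈ (0,1]`. -/
def IsPathIn (Ω : Set (Euc m)) (γ : ℝ → Euc m) : Prop :=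
  ContinuousOn γ (Icc 0 1) ∧ (∀ t ∈ Icc (0:ℝ) 1, γ t ∈ closure Ω) ∧
    ∀ t ∈ Ioc (0:ℝ) 1, γ t ∈ Ω

/-- The length (total variation) of a path `γ : [0,1] → ℝ^m`. -/
def pathLen (γ : ℝ → Euc m) : ℝ≥0∞ := eVariationOn γ (Icc 0 1)

/-- A `D`-non-tangential path in `Ω`: a path in `Ω` such that for every `t ∈ [0,1]` the length of
`γ` restricted to `[0,t]` is at most `D · dist(γ t, ∂Ω)`. -/
def IsNTPath (Ω : Set (Euc m)) (D : ℝ) (γ : ℝ → Euc m) : Prop :=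
  IsPathIn Ω γ ∧ ∀ t ∈ Icc (0:ℝ) 1,
    eVariationOn γ (Icc 0 t) ≤ ENNReal.ofReal (D * infDist (γ t) (frontier Ω))

/-- The `D₀`-John condition: there is `X₀ ∈ Ω` such that every `Y ∈ Ω` can be joined to `X₀` by a
`D₀`-non-tangential path in `Ω` from `Y` to `X₀`. -/
def JohnWith (Ω : Set (Euc m)) (D₀ : ℝ) : Prop :=
  ∃ X₀ ∈ Ω, ∀ Y ∈ Ω, ∃ γ : ℝ → Euc m, IsNTPath Ω D₀ γ ∧ γ 0 = Y ∧ γ 1 = X₀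

/-- The local `(D₀, R₀)`-John condition: for every `x ∈ ∂Ω` and `0 < r < R₀` there is a local John
point `Y ∈ B(x,r) ∩ Ω` with `B(Y, r/D₀) ⊆ Ω` such that every `z ∈ B(x,r) ∩ ∂Ω` can be joined to
`Y` by a `D₀`-non-tangential path in `Ω` of length at most `D₀ r`. -/
def LocalJohnWithin (Ω : Set (Euc m)) (D₀ R₀ : ℝ) : Prop :=
  ∀ x ∈ frontier Ω, ∀ r : ℝ, 0 < r → r < R₀ →
    ∃ Y ∈ ball x r ∩ Ω, ball Y (r / D₀) ⊆ Ω ∧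
      ∀ z ∈ ball x r ∩ frontier Ω, ∃ γ : ℝ → Euc m,
        IsNTPath Ω D₀ γ ∧ γ 0 = z ∧ γ 1 = Y ∧ pathLen γ ≤ ENNReal.ofReal (D₀ * r)

/-- The local `D₀`-John condition (i.e. the local `(D₀, diam ∂Ω)`-John condition). -/
def LocalJohnWith (Ω : Set (Euc m)) (D₀ : ℝ) : Prop :=
  ∀ x ∈ frontier Ω, ∀ r : ℝ, 0 < r → ENNReal.ofReal r < EMetric.diam (frontier Ω) →
    ∃ Y ∈ ball x r ∩ Ω, ball Y (r / D₀) ⊆ Ω ∧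
      ∀ z ∈ ball x r ∩ frontier Ω, ∃ γ : ℝ → Euc m,
        IsNTPath Ω D₀ γ ∧ γ 0 = z ∧ γ 1 = Y ∧ pathLen γ ≤ ENNReal.ofReal (D₀ * r)

/-- The weak local `D₀`-John condition, with surface measure `ℋᵈ` on `∂Ω`. -/
def WeakLocalJohnWith (d : ℝ) (Ω : Set (Euc m)) (D₀ : ℝ) : Prop :=
  ∃ θ : ℝ, 0 < θ ∧ θ ≤ 1 ∧ ∃ R : ℝ, 2 ≤ R ∧ ∀ X ∈ Ω,
    ∃ F : Set (Euc m), MeasurableSet F ∧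
      F ⊆ ball X (R * infDist X (frontier Ω)) ∩ frontier Ω ∧
      ENNReal.ofReal θ * μH[d] (ball X (R * infDist X (frontier Ω)) ∩ frontier Ω) ≤ μH[d] F ∧
      ∀ z ∈ F, ∃ γ : ℝ → Euc m, IsNTPath Ω D₀ γ ∧ γ 0 = z ∧ γ 1 = X ∧
        pathLen γ ≤ ENNReal.ofReal (D₀ * (R * infDist X (frontier Ω)))

/-- The Harnack chain condition: there are `C ≥ 1` and `M : ℝ → ℕ` such that any `X, X' ∈ Ω` with
`δ(X), δ(X') ≥ ρ` and `|X - X'| < Λ ρ` can be joined by a chain of at most `M Λ` open balls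
contained in `Ω`, consecutive balls intersecting, with `C⁻¹ diam Bₖ ≤ dist(Bₖ, ∂Ω) ≤ C diam Bₖ`. -/
def HarnackChain (Ω : Set (Euc m)) : Prop :=
  ∃ C : ℝ, 1 ≤ C ∧ ∃ M : ℝ → ℕ,
    ∀ ρ : ℝ, 0 < ρ → ∀ Λ : ℝ, 1 ≤ Λ → ∀ X ∈ Ω, ∀ X' ∈ Ω,
      ρ ≤ infDist X (frontier Ω) → ρ ≤ infDist X' (frontier Ω) → dist X X' < Λ * ρ →
      ∃ N : ℕ, 1 ≤ N ∧ N ≤ M Λ ∧ ∃ ctr : ℕ → Euc m, ∃ rad : ℕ → ℝ,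
        X ∈ ball (ctr 0) (rad 0) ∧ X' ∈ ball (ctr (N - 1)) (rad (N - 1)) ∧
        (∀ k < N, ball (ctr k) (rad k) ⊆ Ω) ∧
        (∀ k, k + 1 < N → (ball (ctr k) (rad k) ∩ ball (ctr (k + 1)) (rad (k + 1))).Nonempty) ∧
        (∀ k < N,
          C⁻¹ * Metric.diam (ball (ctr k) (rad k))
              ≤ distSet (ball (ctr k) (rad k)) (frontier Ω) ∧
            distSet (ball (ctr k) (rad k)) (frontier Ω)
              ≤ C * Metric.diam (ball (ctr k) (rad k)))

/-- A domain (connected open set) is NTA if it satisfies the Harnack chain condition and the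
2-sided corkscrew condition. -/
def IsNTA (Θ : Set (Euc m)) : Prop :=
  IsOpen Θ ∧ IsConnected Θ ∧ HarnackChain Θ ∧ TwoSidedCorkscrew Θ

/-- `Ω` is a chord-arc domain: NTA with `d`-ADR boundary. -/
def IsCAD (d : ℝ) (Ω : Set (Euc m)) : Prop := IsNTA Ω ∧ IsADR d (frontier Ω)

/-- `Ω` is a 2-sided chord-arc domain: a chord-arc domain such that `int (Ωᶜ)` is NTA. -/
def IsTwoSidedCAD (d : ℝ) (Ω : Set (Euc m)) : Prop := IsCAD d Ω ∧ IsNTA (interior Ωᶜ)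

/-- `E`, with the Euclidean metric, is quasiconvex: any two points of `E` can be joined by a path
in `E` of length at most `C` times their distance. -/
def QuasiconvexSet (E : Set (Euc m)) : Prop :=
  ∃ C : ℝ, 1 ≤ C ∧ ∀ x ∈ E, ∀ y ∈ E, ∃ γ : ℝ → Euc m,
    ContinuousOn γ (Icc 0 1) ∧ (∀ t ∈ Icc (0:ℝ) 1, γ t ∈ E) ∧ γ 0 = x ∧ γ 1 = y ∧
      eVariationOn γ (Icc 0 1) ≤ ENNReal.ofReal (C * dist x y)

/-- `E`, with the Euclidean metric, is annularly quasiconvex. -/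
def AnnularlyQuasiconvexSet (E : Set (Euc m)) : Prop :=
  ∃ C : ℝ, 1 ≤ C ∧ ∀ z ∈ E, ∀ r : ℝ, 0 < r →
    ENNReal.ofReal (C * r) < EMetric.diam E →
    ∀ x ∈ E ∩ (ball z (2 * r) \ ball z r), ∀ y ∈ E ∩ (ball z (2 * r) \ ball z r),
      ∃ γ : ℝ → Euc m, ContinuousOn γ (Icc 0 1) ∧
        (∀ t ∈ Icc (0:ℝ) 1, γ t ∈ E ∩ (ball z (C * r) \ ball z (r / C))) ∧
        γ 0 = x ∧ γ 1 = y ∧ eVariationOn γ (Icc 0 1) ≤ ENNReal.ofReal (C * dist x y)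

/-- `ρ` is an upper gradient of `f` on `E`: for every `1`-Lipschitz curve `γ : [0,L] → E` we have
`|f(γ 0) - f(γ L)| ≤ ∫₀ᴸ ρ(γ t) dt`. -/
def IsUpperGradientOn (f : Euc m → ℝ) (ρ : Euc m → ℝ≥0∞) (E : Set (Euc m)) : Prop :=
  ∀ L : ℝ, 0 ≤ L → ∀ γ : ℝ → Euc m, LipschitzOnWith 1 γ (Icc 0 L) →
    (∀ t ∈ Icc (0:ℝ) L, γ t ∈ E) →
    ENNReal.ofReal |f (γ 0) - f (γ L)| ≤ ∫⁻ t in Icc (0:ℝ) L, ρ (γ t)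

/-- `ϱ` is admissible for the pair `(E,F)` in `S`: `∫_γ ϱ ds ≥ 1` for every rectifiable
(`1`-Lipschitz parametrized) path in `S` connecting `E` and `F`. -/
def AdmissibleFor (S E F : Set (Euc m)) (ϱ : Euc m → ℝ≥0∞) : Prop :=
  ∀ L : ℝ, 0 < L → ∀ γ : ℝ → Euc m, LipschitzOnWith 1 γ (Icc 0 L) →
    (∀ t ∈ Icc (0:ℝ) L, γ t ∈ S) → γ 0 ∈ E → γ L ∈ F →
    1 ≤ ∫⁻ t in Icc (0:ℝ) L, ϱ (γ t)

/-- The `d`-modulus of the family of paths in `S` connecting `E` and `F`, w.r.t. measure `σ`. -/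
def modOn (σ : Measure (Euc m)) (S E F : Set (Euc m)) (d : ℝ) : ℝ≥0∞ :=
  sInf {v : ℝ≥0∞ | ∃ ϱ : Euc m → ℝ≥0∞, Measurable ϱ ∧ AdmissibleFor S E F ϱ ∧
    v = ∫⁻ x, ϱ x ^ d ∂σ}

/-- `L` is an affine hyperplane (affine subspace of codimension 1) of `ℝ^m`. -/
def IsAffineHyperplane (L : Set (Euc m)) : Prop :=
  ∃ A : AffineSubspace ℝ (Euc m), (A : Set (Euc m)) = L ∧
    Module.finrank ℝ A.direction + 1 = m

/-- The bilateral β-number `bβ_{∂Ω}(B(x,r), L)`. -/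
def bBeta (Ω : Set (Euc m)) (x : Euc m) (r : ℝ) (L : Set (Euc m)) : ℝ :=
  sSup ((fun y => infDist y L / r) '' (ball x r ∩ frontier Ω)) +
    sSup ((fun Y => infDist Y (frontier Ω) / r) '' (L ∩ ball x r))

/-- The open `c`-neighborhood `U_c(L)` of `L`. -/
def tubeNbhd (L : Set (Euc m)) (c : ℝ) : Set (Euc m) := {Y | infDist Y L < c}

/-- The open diameter `{(x,0) : -1 < x < 1} ⊆ ℝ²`. -/
def diamSeg : Set (Euc 2) := {p : Euc 2 | p 1 = 0 ∧ -1 < p 0 ∧ p 0 < 1}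

/-- `Ω₃ := B(0,1) ∖ {(x,0) : -1 < x < 1}`, the disc minus a full diameter. -/
def cutDisc : Set (Euc 2) := ball (0 : Euc 2) 1 \ diamSeg


lemma euc2_norm (p : Euc 2) : ‖p‖ = Real.sqrt (p 0 ^ 2 + p 1 ^ 2) := by
  rw [EuclideanSpace.norm_eq, Fin.sum_univ_two]; simp [sq_abs]

lemma euc2_dist (p q : Euc 2) : dist p q = Real.sqrt ((p 0 - q 0) ^ 2 + (p 1 - q 1) ^ 2) := by
  rw [EuclideanSpace.dist_eq, Fin.sum_univ_two]; simp [Real.dist_eq, sq_abs]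

lemma coord0_abs_le_norm (p : Euc 2) : |p 0| ≤ ‖p‖ := by
  rw [euc2_norm]
  calc |p 0| = Real.sqrt (p 0 ^ 2) := (Real.sqrt_sq_eq_abs _).symm
  _ ≤ _ := Real.sqrt_le_sqrt (by nlinarith [sq_nonneg (p 1)])

lemma coord1_abs_le_norm (p : Euc 2) : |p 1| ≤ ‖p‖ := by
  rw [euc2_norm]
  calc |p 1| = Real.sqrt (p 1 ^ 2) := (Real.sqrt_sq_eq_abs _).symm
  _ ≤ _ := Real.sqrt_le_sqrt (by nlinarith [sq_nonneg (p 0)])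

lemma coord1_abs_le_dist (p q : Euc 2) : |p 1 - q 1| ≤ dist p q := by
  rw [dist_eq_norm]; exact coord1_abs_le_norm (p - q)

lemma cont_coord1 : Continuous (fun p : Euc 2 => p 1) :=
  (EuclideanSpace.proj (1 : Fin 2) : Euc 2 →L[ℝ] ℝ).continuous

lemma cutDisc_eq : cutDisc = ball (0 : Euc 2) 1 ∩ {p | p 1 ≠ 0} := by
  ext p
  simp only [cutDisc, diamSeg, mem_diff, mem_inter_iff, mem_setOf_eq, mem_ball, dist_zero_right]
  constructor
  · rintro ⟨hb, hc⟩
    refine ⟨hb, fun h1 => hc ⟨h1, ?_, ?_⟩⟩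
    · exact (abs_lt.1 ((coord0_abs_le_norm p).trans_lt hb)).1
    · exact (abs_lt.1 ((coord0_abs_le_norm p).trans_lt hb)).2
  · rintro ⟨hb, h1⟩
    exact ⟨hb, fun h => h1 h.1⟩

lemma isOpen_cutDisc : IsOpen cutDisc := by
  rw [cutDisc_eq]
  exact isOpen_ball.inter (isOpen_ne_fun cont_coord1 continuous_const)

lemma mem_cutDisc {p : Euc 2} : p ∈ cutDisc ↔ ‖p‖ < 1 ∧ p 1 ≠ 0 := by
  rw [cutDisc_eq]; simp [mem_ball, dist_zero_right]

lemma cutDisc_subset_closedBall : cutDisc ⊆ closedBall (0 : Euc 2) 1 := fun p hp =>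
  mem_closedBall_zero_iff.2 (mem_cutDisc.1 hp).1.le

lemma closure_cutDisc_subset : closure cutDisc ⊆ closedBall (0 : Euc 2) 1 :=
  closure_minimal cutDisc_subset_closedBall isClosed_closedBall

lemma frontier_cutDisc_eq : frontier cutDisc = closure cutDisc \ cutDisc := by
  rw [isOpen_cutDisc.frontier_eq]

lemma frontier_subset_aux : frontier cutDisc ⊆ {p : Euc 2 | p 1 = 0 ∨ ‖p‖ = 1} := by
  intro p hp
  rw [frontier_cutDisc_eq] at hp
  have hb : ‖p‖ ≤ 1 := mem_closedBall_zero_iff.1 (closure_cutDisc_subset hp.1)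
  simp only [mem_setOf_eq]
  by_contra h
  push_neg at h
  exact hp.2 (mem_cutDisc.2 ⟨lt_of_le_of_ne hb h.2, h.1⟩)

lemma norm_le_one_of_mem_frontier {p : Euc 2} (hp : p ∈ frontier cutDisc) : ‖p‖ ≤ 1 :=
  mem_closedBall_zero_iff.1 (closure_cutDisc_subset (frontier_subset_closure hp))

lemma mem_frontier_of_closure {p : Euc 2} (h1 : p ∈ closure cutDisc) (h2 : p ∉ cutDisc) :
    p ∈ frontier cutDisc := by rw [frontier_cutDisc_eq]; exact ⟨h1, h2⟩

lemma seg_mem_frontier {a : ℝ} (ha : |a| < 1) : (!₂[a, 0] : Euc 2) ∈ frontier cutDisc := by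
  apply mem_frontier_of_closure
  · rw [Metric.mem_closure_iff]
    intro ε hε
    have h1 : (0:ℝ) < 1 - a ^ 2 := by nlinarith [abs_nonneg a, sq_abs a]
    have hs0 : 0 < Real.sqrt (1 - a ^ 2) := Real.sqrt_pos.2 h1
    obtain ⟨t, ht0, htε, hts⟩ : ∃ t : ℝ, 0 < t ∧ t < ε ∧ t ^ 2 < 1 - a ^ 2 := by
      refine ⟨min (ε / 2) (Real.sqrt (1 - a ^ 2) / 2), lt_min (by linarith) (by linarith),
        lt_of_le_of_lt (min_le_left _ _) (by linarith), ?_⟩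
      have h2 : min (ε / 2) (Real.sqrt (1 - a ^ 2) / 2) ≤ Real.sqrt (1 - a ^ 2) / 2 :=
        min_le_right _ _
      have h3 : 0 ≤ min (ε / 2) (Real.sqrt (1 - a ^ 2) / 2) :=
        le_min (by linarith) (by linarith)
      have := Real.sq_sqrt h1.le
      nlinarith
    refine ⟨!₂[a, t], mem_cutDisc.2 ⟨?_, ?_⟩, ?_⟩
    · rw [euc2_norm]
      have e0 : (!₂[a, t] : Euc 2) 0 = a := rfl
      have e1 : (!₂[a, t] : Euc 2) 1 = t := rfl
      rw [e0, e1]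
      calc Real.sqrt (a ^ 2 + t ^ 2) < Real.sqrt 1 :=
            Real.sqrt_lt_sqrt (by positivity) (by linarith)
      _ = 1 := Real.sqrt_one
    · exact ne_of_gt ht0
    · rw [euc2_dist]
      have e0 : (!₂[a, t] : Euc 2) 0 = a := rfl
      have e1 : (!₂[a, t] : Euc 2) 1 = t := rfl
      have f0 : (!₂[a, 0] : Euc 2) 0 = a := rfl
      have f1 : (!₂[a, 0] : Euc 2) 1 = 0 := rfl
      rw [e0, e1, f0, f1]
      have h4 : (a - a) ^ 2 + (0 - t) ^ 2 = t ^ 2 := by ring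
      rw [h4, Real.sqrt_sq ht0.le]
      exact htε
  · intro h
    exact (mem_cutDisc.1 h).2 rfl

lemma sphere_mem_frontier {q : Euc 2} (hq : ‖q‖ = 1) (h1 : q 1 ≠ 0) :
    q ∈ frontier cutDisc := by
  apply mem_frontier_of_closure
  · rw [Metric.mem_closure_iff]
    intro ε hε
    obtain ⟨m, hm0, hm1, hmε⟩ : ∃ m : ℝ, 0 < m ∧ m < 1 ∧ m < ε :=
      ⟨min (ε / 2) (1 / 2), lt_min (by linarith) (by norm_num),
        lt_of_le_of_lt (min_le_right _ _) (by norm_num),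
        lt_of_le_of_lt (min_le_left _ _) (by linarith)⟩
    refine ⟨(1 - m) • q, mem_cutDisc.2 ⟨?_, ?_⟩, ?_⟩
    · rw [norm_smul, hq, mul_one, Real.norm_eq_abs, abs_of_pos (by linarith)]; linarith
    · have e : ((1 - m) • q) 1 = (1 - m) * q 1 := rfl
      rw [e]
      exact mul_ne_zero (ne_of_gt (by linarith : (0:ℝ) < 1 - m)) h1
    · have e : q - (1 - m) • q = m • q := by
        rw [sub_smul, one_smul]; abel
      rw [dist_eq_norm, e, norm_smul, hq, mul_one, Real.norm_eq_abs, abs_of_pos hm0]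
      exact hmε
  · intro h
    exact absurd (mem_cutDisc.1 h).1 (by rw [hq]; exact lt_irrefl 1)
lemma evar_affine (z X : Euc 2) {t : ℝ} (ht : 0 ≤ t) :
    eVariationOn (fun u : ℝ => z + u • (X - z)) (Icc 0 t) ≤ ENNReal.ofReal (t * dist X z) := by
  have hf : LipschitzWith ‖X - z‖₊ (fun u : ℝ => z + u • (X - z)) := by
    apply LipschitzWith.of_dist_le_mul
    intro a b
    have e : (z + a • (X - z)) - (z + b • (X - z)) = (a - b) • (X - z) := by
      rw [add_sub_add_left_eq_sub, ← sub_smul]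
    rw [dist_eq_norm, e, norm_smul, Real.norm_eq_abs, Real.dist_eq, coe_nnnorm, mul_comm]
  have h1 : eVariationOn (fun u : ℝ => u) (Icc 0 t) ≤ ENNReal.ofReal t := by
    have hm : MonotoneOn (fun u : ℝ => u) (Icc 0 t) := fun a _ b _ h => h
    have h2 := hm.eVariationOn_le (left_mem_Icc.2 ht) (right_mem_Icc.2 ht)
    simpa [inter_self] using h2
  calc eVariationOn (fun u : ℝ => z + u • (X - z)) (Icc 0 t)
      = eVariationOn ((fun u : ℝ => z + u • (X - z)) ∘ (fun u : ℝ => u)) (Icc 0 t) := rfl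
    _ ≤ ‖X - z‖₊ * eVariationOn (fun u : ℝ => u) (Icc 0 t) :=
        LipschitzOnWith.comp_eVariationOn_le (hf.lipschitzOnWith (s := univ)) (mapsTo_univ _ _)
    _ ≤ ‖X - z‖₊ * ENNReal.ofReal t := mul_le_mul_right h1 _
    _ = ENNReal.ofReal (t * dist X z) := by
        rw [← ENNReal.ofReal_coe_nnreal, coe_nnnorm, ← ENNReal.ofReal_mul (norm_nonneg _), dist_eq_norm,
          mul_comm]

-- reflection
def refl2 (p : Euc 2) : Euc 2 := !₂[p 0, -(p 1)]

lemma refl2_apply0 (p : Euc 2) : refl2 p 0 = p 0 := rfl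
lemma refl2_apply1 (p : Euc 2) : refl2 p 1 = -(p 1) := rfl

lemma refl2_isometry : Isometry refl2 := by
  apply Isometry.of_dist_eq
  intro a b
  rw [euc2_dist, euc2_dist, refl2_apply0, refl2_apply0, refl2_apply1, refl2_apply1]
  congr 1
  ring

lemma refl2_norm (p : Euc 2) : ‖refl2 p‖ = ‖p‖ := by
  rw [euc2_norm, euc2_norm, refl2_apply0, refl2_apply1]
  congr 1
  ring

lemma refl2_mem_cutDisc {p : Euc 2} (hp : p ∈ cutDisc) : refl2 p ∈ cutDisc := by
  rw [mem_cutDisc] at hp ⊢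
  refine ⟨by rw [refl2_norm]; exact hp.1, by rw [refl2_apply1]; exact neg_ne_zero.2 hp.2⟩

lemma refl2_involutive (p : Euc 2) : refl2 (refl2 p) = p := by
  ext i
  fin_cases i
  · rfl
  · show -(-(p 1)) = p 1
    exact neg_neg _

lemma refl2_mem_frontier {p : Euc 2} (hp : p ∈ frontier cutDisc) :
    refl2 p ∈ frontier cutDisc := by
  rw [frontier_cutDisc_eq] at hp ⊢
  constructor
  · have h1 : refl2 '' closure cutDisc ⊆ closure cutDisc := by
      refine (image_closure_subset_closure_image refl2_isometry.continuous).trans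
        (closure_mono ?_)
      exact image_subset_iff.2 fun q hq => refl2_mem_cutDisc hq
    exact h1 ⟨p, hp.1, rfl⟩
  · intro h
    have := refl2_mem_cutDisc h
    rw [refl2_involutive] at this
    exact hp.2 this

-- infDist facts
lemma frontier_cutDisc_nonempty : (frontier cutDisc).Nonempty :=
  ⟨!₂[(0:ℝ), 0], seg_mem_frontier (by norm_num)⟩

lemma norm_pos_of_mem_cutDisc {X : Euc 2} (hX : X ∈ cutDisc) : 0 < ‖X‖ := by
  rcases mem_cutDisc.1 hX with ⟨-, h1⟩
  calc (0:ℝ) < |X 1| := abs_pos.2 h1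
  _ ≤ ‖X‖ := coord1_abs_le_norm X

lemma infDist_le_abs_coord1 {X : Euc 2} (hX : X ∈ cutDisc) :
    infDist X (frontier cutDisc) ≤ |X 1| := by
  have h0 : |X 0| < 1 := lt_of_le_of_lt (coord0_abs_le_norm X) (mem_cutDisc.1 hX).1
  have hmem := seg_mem_frontier h0
  have hd : dist X (!₂[X 0, 0] : Euc 2) = |X 1| := by
    rw [euc2_dist]
    have e0 : (!₂[X 0, 0] : Euc 2) 0 = X 0 := rfl
    have e1 : (!₂[X 0, 0] : Euc 2) 1 = 0 := rfl
    rw [e0, e1, sub_self, sub_zero]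
    simp [Real.sqrt_sq_eq_abs]
  calc infDist X (frontier cutDisc) ≤ dist X (!₂[X 0, 0] : Euc 2) := infDist_le_dist_of_mem hmem
  _ = |X 1| := hd

lemma infDist_le_one_sub_norm {X : Euc 2} (hX : X ∈ cutDisc) :
    infDist X (frontier cutDisc) ≤ 1 - ‖X‖ := by
  have hn := norm_pos_of_mem_cutDisc hX
  set q : Euc 2 := ‖X‖⁻¹ • X with hq
  have hq1 : ‖q‖ = 1 := by
    rw [hq, norm_smul, Real.norm_eq_abs, abs_of_pos (by positivity), inv_mul_cancel₀ hn.ne']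
  have hqc : q 1 ≠ 0 := by
    have e : q 1 = ‖X‖⁻¹ * X 1 := rfl
    rw [e]
    exact mul_ne_zero (by positivity) (mem_cutDisc.1 hX).2
  have hmem := sphere_mem_frontier hq1 hqc
  have hd : dist X q = 1 - ‖X‖ := by
    have e : X - q = (1 - ‖X‖⁻¹) • X := by rw [hq, sub_smul, one_smul]
    rw [dist_eq_norm, e, norm_smul, Real.norm_eq_abs]
    have hX1 : ‖X‖ < 1 := (mem_cutDisc.1 hX).1
    have : |1 - ‖X‖⁻¹| = ‖X‖⁻¹ - 1 := by
      rw [abs_of_nonpos]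
      · ring
      · have : (1:ℝ) ≤ ‖X‖⁻¹ := (one_le_inv_iff₀.2 ⟨hn, hX1.le⟩)
        linarith
    rw [this, sub_mul, inv_mul_cancel₀ hn.ne', one_mul]
  calc infDist X (frontier cutDisc) ≤ dist X q := infDist_le_dist_of_mem hmem
  _ = 1 - ‖X‖ := hd

lemma le_infDist' {r : ℝ} {x : Euc 2} {s : Set (Euc 2)} (hs : s.Nonempty)
    (h : ∀ y ∈ s, r ≤ dist x y) : r ≤ infDist x s := by
  by_contra hlt
  push_neg at hlt
  obtain ⟨y, hy, hdy⟩ := (infDist_lt_iff hs).1 hlt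
  exact absurd hdy (not_lt.2 (h y hy))

lemma sign_mul_le_abs {s : ℝ} (hs : s = 1 ∨ s = -1) (w : ℝ) : s * w ≤ |w| := by
  rcases hs with h | h <;> subst h
  · rw [one_mul]; exact le_abs_self w
  · rw [neg_one_mul]; exact neg_le_abs w

lemma nt_path {X : Euc 2} (hX : X ∈ cutDisc) {s : ℝ} (hs : s = 1 ∨ s = -1)
    (hsX : 0 < s * X 1) {z : Euc 2} (hz : z ∈ frontier cutDisc) (hz1 : 0 ≤ s * z 1)
    (hzb : dist z X < 2 * infDist X (frontier cutDisc)) :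
    ∃ γ : ℝ → Euc 2, IsNTPath cutDisc 2 γ ∧ γ 0 = z ∧ γ 1 = X ∧
      pathLen γ ≤ ENNReal.ofReal (2 * (2 * infDist X (frontier cutDisc))) := by
  set δ := infDist X (frontier cutDisc) with hδ
  have hδ0 : 0 ≤ δ := infDist_nonneg
  have hδ1 : δ ≤ s * X 1 := by
    have := infDist_le_abs_coord1 hX
    have h2 : |X 1| = s * X 1 := by
      rcases hs with h | h
      · rw [h, one_mul, abs_of_pos (by rw [h, one_mul] at hsX; exact hsX)]
      · rw [h] at hsX ⊢
        rw [abs_of_neg (by nlinarith), neg_one_mul]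
    rw [← h2]
    exact this
  have hδ2 : δ ≤ 1 - ‖X‖ := infDist_le_one_sub_norm hX
  have hzn : ‖z‖ ≤ 1 := norm_le_one_of_mem_frontier hz
  have hXn : ‖X‖ < 1 := (mem_cutDisc.1 hX).1
  refine ⟨fun u : ℝ => z + u • (X - z), ⟨⟨?_, ?_, ?_⟩, ?_⟩, by simp, by simp, ?_⟩
  next => -- continuity
    exact (continuous_const.add (continuous_id.smul continuous_const)).continuousOn
  next => -- in closure
    intro t htI
    rcases eq_or_lt_of_le htI.1 with h0 | h0
    · rw [← h0]
      show z + (0:ℝ) • (X - z) ∈ closure cutDisc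
      simpa using frontier_subset_closure hz
    · apply subset_closure
      show z + t • (X - z) ∈ cutDisc
      have hcoord : s * (z + t • (X - z)) 1 ≥ t * (s * X 1) := by
        have e : (z + t • (X - z)) 1 = z 1 + t * (X 1 - z 1) := rfl
        rw [e]
        nlinarith [htI.2, hz1]
      have hnorm : ‖z + t • (X - z)‖ ≤ 1 - t * (1 - ‖X‖) := by
        have e : z + t • (X - z) = (1 - t) • z + t • X := by
          rw [sub_smul, one_smul, smul_sub]; abel
        rw [e]
        calc ‖(1 - t) • z + t • X‖ ≤ ‖(1 - t) • z‖ + ‖t • X‖ := norm_add_le _ _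
        _ = (1 - t) * ‖z‖ + t * ‖X‖ := by
            rw [norm_smul, norm_smul, Real.norm_eq_abs, Real.norm_eq_abs,
              abs_of_nonneg (by linarith [htI.2]), abs_of_nonneg h0.le]
        _ ≤ (1 - t) * 1 + t * ‖X‖ := by nlinarith [htI.2, norm_nonneg z]
        _ = 1 - t * (1 - ‖X‖) := by ring
      refine mem_cutDisc.2 ⟨by nlinarith, fun hc => ?_⟩
      rw [hc, mul_zero] at hcoord
      nlinarith
  next => -- in Ω on Ioc
    intro t htI
    show z + t • (X - z) ∈ cutDisc
    have hcoord : s * (z + t • (X - z)) 1 ≥ t * (s * X 1) := by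
      have e : (z + t • (X - z)) 1 = z 1 + t * (X 1 - z 1) := rfl
      rw [e]
      nlinarith [htI.2, hz1]
    have hnorm : ‖z + t • (X - z)‖ ≤ 1 - t * (1 - ‖X‖) := by
      have e : z + t • (X - z) = (1 - t) • z + t • X := by
        rw [sub_smul, one_smul, smul_sub]; abel
      rw [e]
      calc ‖(1 - t) • z + t • X‖ ≤ ‖(1 - t) • z‖ + ‖t • X‖ := norm_add_le _ _
      _ = (1 - t) * ‖z‖ + t * ‖X‖ := by
          rw [norm_smul, norm_smul, Real.norm_eq_abs, Real.norm_eq_abs,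
            abs_of_nonneg (by linarith [htI.2]), abs_of_nonneg htI.1.le]
      _ ≤ (1 - t) * 1 + t * ‖X‖ := by nlinarith [htI.2, norm_nonneg z]
      _ = 1 - t * (1 - ‖X‖) := by ring
    refine mem_cutDisc.2 ⟨by nlinarith [htI.1], fun hc => ?_⟩
    rw [hc, mul_zero] at hcoord
    nlinarith [htI.1]
  next => -- NT estimate
    intro t htI
    have hlow : t * δ ≤ infDist (z + t • (X - z)) (frontier cutDisc) := by
      apply le_infDist' frontier_cutDisc_nonempty
      intro q hq
      rcases frontier_subset_aux hq with hq1 | hq1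
      · -- q 1 = 0
        have h1 : |(z + t • (X - z)) 1 - q 1| ≤ dist (z + t • (X - z)) q :=
          coord1_abs_le_dist _ _
        have hcoord : s * (z + t • (X - z)) 1 ≥ t * (s * X 1) := by
          have e : (z + t • (X - z)) 1 = z 1 + t * (X 1 - z 1) := rfl
          rw [e]
          nlinarith [htI.2, hz1]
        have h2 : t * δ ≤ s * (z + t • (X - z)) 1 := by nlinarith [htI.1]
        have h3 : s * (z + t • (X - z)) 1 ≤ |(z + t • (X - z)) 1| :=
          sign_mul_le_abs hs _
        rw [hq1, sub_zero] at h1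
        linarith
      · -- ‖q‖ = 1
        have hnorm : ‖z + t • (X - z)‖ ≤ 1 - t * (1 - ‖X‖) := by
          have e : z + t • (X - z) = (1 - t) • z + t • X := by
            rw [sub_smul, one_smul, smul_sub]; abel
          rw [e]
          calc ‖(1 - t) • z + t • X‖ ≤ ‖(1 - t) • z‖ + ‖t • X‖ := norm_add_le _ _
          _ = (1 - t) * ‖z‖ + t * ‖X‖ := by
              rw [norm_smul, norm_smul, Real.norm_eq_abs, Real.norm_eq_abs,
                abs_of_nonneg (by linarith [htI.2]), abs_of_nonneg htI.1]
          _ ≤ (1 - t) * 1 + t * ‖X‖ := by nlinarith [htI.2, norm_nonneg z]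
          _ = 1 - t * (1 - ‖X‖) := by ring
        have h4 : ‖q‖ - ‖z + t • (X - z)‖ ≤ ‖q - (z + t • (X - z))‖ := norm_sub_norm_le _ _
        have h5 : dist (z + t • (X - z)) q = ‖q - (z + t • (X - z))‖ := by
          rw [dist_comm, dist_eq_norm]
        rw [hq1] at h4
        rw [h5]
        nlinarith [htI.1]
    calc eVariationOn (fun u : ℝ => z + u • (X - z)) (Icc 0 t)
        ≤ ENNReal.ofReal (t * dist X z) := evar_affine z X htI.1
      _ ≤ ENNReal.ofReal (2 * infDist ((fun u : ℝ => z + u • (X - z)) t) (frontier cutDisc)) := by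
          apply ENNReal.ofReal_le_ofReal
          show t * dist X z ≤ 2 * infDist (z + t • (X - z)) (frontier cutDisc)
          have hdc : dist X z = dist z X := dist_comm _ _
          nlinarith [htI.1, dist_nonneg (x := z) (y := X)]
  next => -- total length
    calc pathLen (fun u : ℝ => z + u • (X - z))
        = eVariationOn (fun u : ℝ => z + u • (X - z)) (Icc 0 1) := rfl
      _ ≤ ENNReal.ofReal (1 * dist X z) := evar_affine z X zero_le_one
      _ ≤ ENNReal.ofReal (2 * (2 * δ)) := by
          apply ENNReal.ofReal_le_ofReal
          rw [one_mul, dist_comm]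
          linarith

-- measure comparison via reflection
lemma measure_half {X : Euc 2} (hX : X ∈ cutDisc) {s : ℝ} (hs : s = 1 ∨ s = -1)
    (hsX : 0 < s * X 1) :
    ENNReal.ofReal (1/2) *
        μH[(1:ℝ)] (ball X (2 * infDist X (frontier cutDisc)) ∩ frontier cutDisc) ≤
      μH[(1:ℝ)] ((ball X (2 * infDist X (frontier cutDisc)) ∩ frontier cutDisc) ∩
        {z : Euc 2 | 0 ≤ s * z 1}) := by
  set Δ : Set (Euc 2) := ball X (2 * infDist X (frontier cutDisc)) ∩ frontier cutDisc with hΔ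
  set A : Set (Euc 2) := {z : Euc 2 | 0 ≤ s * z 1} with hA
  have hss : s * s = 1 := by rcases hs with h | h <;> rw [h] <;> norm_num
  have himg : refl2 '' (Δ \ A) ⊆ Δ ∩ A := by
    rintro _ ⟨z, ⟨⟨hzb, hzf⟩, hzA⟩, rfl⟩
    have hz1 : s * z 1 < 0 := lt_of_not_ge hzA
    refine ⟨⟨?_, refl2_mem_frontier hzf⟩, ?_⟩
    · rw [mem_ball] at hzb ⊢
      have hd : dist (refl2 z) X ≤ dist z X := by
        rw [euc2_dist, euc2_dist, refl2_apply0, refl2_apply1]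
        apply Real.sqrt_le_sqrt
        have hzx : z 1 * X 1 < 0 := by
          have h4 : (s * z 1) * (s * X 1) < 0 := mul_neg_of_neg_of_pos hz1 hsX
          calc z 1 * X 1 = (s * s) * (z 1 * X 1) := by rw [hss, one_mul]
          _ = (s * z 1) * (s * X 1) := by ring
          _ < 0 := h4
        nlinarith
      exact lt_of_le_of_lt hd hzb
    · show 0 ≤ s * refl2 z 1
      rw [refl2_apply1]
      nlinarith
  have hmeas : μH[(1:ℝ)] (Δ \ A) ≤ μH[(1:ℝ)] (Δ ∩ A) := by
    calc μH[(1:ℝ)] (Δ \ A) = μH[(1:ℝ)] (refl2 '' (Δ \ A)) :=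
          (refl2_isometry.hausdorffMeasure_image (Or.inl zero_le_one) _).symm
    _ ≤ μH[(1:ℝ)] (Δ ∩ A) := measure_mono himg
  have hsplit : μH[(1:ℝ)] Δ ≤ μH[(1:ℝ)] (Δ ∩ A) + μH[(1:ℝ)] (Δ \ A) :=
    measure_le_inter_add_diff _ _ _
  have h2 : μH[(1:ℝ)] Δ ≤ 2 * μH[(1:ℝ)] (Δ ∩ A) := by
    calc μH[(1:ℝ)] Δ ≤ μH[(1:ℝ)] (Δ ∩ A) + μH[(1:ℝ)] (Δ \ A) := hsplit
    _ ≤ μH[(1:ℝ)] (Δ ∩ A) + μH[(1:ℝ)] (Δ ∩ A) := add_le_add_right hmeas _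
    _ = 2 * μH[(1:ℝ)] (Δ ∩ A) := (two_mul _).symm
  calc ENNReal.ofReal (1/2) * μH[(1:ℝ)] Δ
      ≤ ENNReal.ofReal (1/2) * (2 * μH[(1:ℝ)] (Δ ∩ A)) := mul_le_mul_right h2 _
    _ = (ENNReal.ofReal (1/2) * 2) * μH[(1:ℝ)] (Δ ∩ A) := (mul_assoc _ _ _).symm
    _ = μH[(1:ℝ)] (Δ ∩ A) := by
        have : ENNReal.ofReal (1/2) * 2 = 1 := by
          rw [show (2:ℝ≥0∞) = ENNReal.ofReal 2 by simp,
            ← ENNReal.ofReal_mul (by norm_num)]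
          norm_num
        rw [this, one_mul]

-- IVT crossing lemma
lemma no_cross {γ : ℝ → Euc 2} (hc : ContinuousOn γ (Icc 0 1))
    (hΩ : ∀ t ∈ Ioc (0:ℝ) 1, γ t ∈ cutDisc) (h0 : (γ 0) 1 ≠ 0)
    (hsign : (γ 0) 1 * (γ 1) 1 < 0) : False := by
  have hcont : ContinuousOn (fun t => (γ t) 1) (uIcc (0:ℝ) 1) := by
    rw [uIcc_of_le zero_le_one]
    exact cont_coord1.comp_continuousOn hc
  have hmem : (0:ℝ) ∈ uIcc ((γ 0) 1) ((γ 1) 1) := by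
    rcases lt_or_ge ((γ 0) 1) 0 with h | h
    · have : 0 < (γ 1) 1 := by nlinarith
      exact mem_uIcc.2 (Or.inl ⟨h.le, this.le⟩)
    · have h' : 0 < (γ 0) 1 := lt_of_le_of_ne h (Ne.symm h0)
      have : (γ 1) 1 < 0 := by nlinarith
      exact mem_uIcc.2 (Or.inr ⟨this.le, h'.le⟩)
  obtain ⟨t, ht, hft⟩ := intermediate_value_uIcc hcont hmem
  rw [uIcc_of_le zero_le_one] at ht
  rcases eq_or_lt_of_le ht.1 with h0t | h0t
  · rw [← h0t] at hft
    exact h0 hft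
  · exact (mem_cutDisc.1 (hΩ t ⟨h0t, ht.2⟩)).2 hft

-- tips of the slit are in the frontier
lemma tip_mem_frontier {σ : ℝ} (hσ : σ = 1 ∨ σ = -1) :
    (!₂[σ, 0] : Euc 2) ∈ frontier cutDisc := by
  have hσ2 : σ ^ 2 = 1 := by rcases hσ with h | h <;> rw [h] <;> norm_num
  apply mem_frontier_of_closure
  · rw [Metric.mem_closure_iff]
    intro ε hε
    obtain ⟨t, ht0, ht1, htε⟩ : ∃ t : ℝ, 0 < t ∧ t < 1 ∧ 2 * t < ε :=
      ⟨min (ε / 4) (1 / 2), lt_min (by linarith) (by norm_num),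
        lt_of_le_of_lt (min_le_right _ _) (by norm_num), by
          have := min_le_left (ε / 4) (1/2); linarith⟩
    refine ⟨!₂[σ * (1 - t), t], mem_cutDisc.2 ⟨?_, ?_⟩, ?_⟩
    · rw [euc2_norm]
      have e0 : (!₂[σ * (1 - t), t] : Euc 2) 0 = σ * (1 - t) := rfl
      have e1 : (!₂[σ * (1 - t), t] : Euc 2) 1 = t := rfl
      rw [e0, e1]
      have : (σ * (1 - t)) ^ 2 + t ^ 2 < 1 := by nlinarith
      calc Real.sqrt ((σ * (1 - t)) ^ 2 + t ^ 2) < Real.sqrt 1 :=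
            Real.sqrt_lt_sqrt (by positivity) this
      _ = 1 := Real.sqrt_one
    · exact ne_of_gt ht0
    · rw [euc2_dist]
      have e0 : (!₂[σ, 0] : Euc 2) 0 = σ := rfl
      have e1 : (!₂[σ, 0] : Euc 2) 1 = 0 := rfl
      have f0 : (!₂[σ * (1 - t), t] : Euc 2) 0 = σ * (1 - t) := rfl
      have f1 : (!₂[σ * (1 - t), t] : Euc 2) 1 = t := rfl
      rw [e0, e1, f0, f1]
      have : (σ - σ * (1 - t)) ^ 2 + (0 - t) ^ 2 = (σ ^ 2 + 1) * t ^ 2 := by ring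
      rw [this, hσ2]
      calc Real.sqrt ((1 + 1) * t ^ 2) ≤ Real.sqrt ((2 * t) ^ 2) := by
            apply Real.sqrt_le_sqrt; nlinarith
      _ = 2 * t := Real.sqrt_sq (by linarith)
      _ < ε := htε
  · intro h
    have := (mem_cutDisc.1 h).1
    rw [euc2_norm] at this
    have e0 : (!₂[σ, 0] : Euc 2) 0 = σ := rfl
    have e1 : (!₂[σ, 0] : Euc 2) 1 = 0 := rfl
    rw [e0, e1] at this
    have : Real.sqrt 1 < 1 := by
      have h4 : σ ^ 2 + 0 ^ 2 = 1 := by rw [hσ2]; ring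
      rwa [h4] at this
    rw [Real.sqrt_one] at this
    exact lt_irrefl 1 this

lemma halfpt_mem {σ : ℝ} (hσ : σ = 1 ∨ σ = -1) : (!₂[(0:ℝ), σ / 2] : Euc 2) ∈ cutDisc := by
  have hσ0 : σ ≠ 0 := by rcases hσ with h | h <;> rw [h] <;> norm_num
  have hσ2 : σ ^ 2 = 1 := by rcases hσ with h | h <;> rw [h] <;> norm_num
  refine mem_cutDisc.2 ⟨?_, ?_⟩
  · rw [euc2_norm]
    have e0 : (!₂[(0:ℝ), σ / 2] : Euc 2) 0 = 0 := rfl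
    have e1 : (!₂[(0:ℝ), σ / 2] : Euc 2) 1 = σ / 2 := rfl
    rw [e0, e1]
    have : (0:ℝ) ^ 2 + (σ / 2) ^ 2 = 1/4 := by rw [zero_pow (by norm_num), zero_add]; nlinarith
    rw [this]
    calc Real.sqrt (1/4) < Real.sqrt 1 := Real.sqrt_lt_sqrt (by norm_num) (by norm_num)
    _ = 1 := Real.sqrt_one
  · show σ / 2 ≠ 0
    exact div_ne_zero hσ0 (by norm_num)

lemma circpt_mem_frontier {σ : ℝ} (hσ : σ = 1 ∨ σ = -1) :
    (!₂[(4:ℝ)/5, σ * (3/5)] : Euc 2) ∈ frontier cutDisc := by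
  have hσ0 : σ ≠ 0 := by rcases hσ with h | h <;> rw [h] <;> norm_num
  have hσ2 : σ ^ 2 = 1 := by rcases hσ with h | h <;> rw [h] <;> norm_num
  apply sphere_mem_frontier
  · rw [euc2_norm]
    have e0 : (!₂[(4:ℝ)/5, σ * (3/5)] : Euc 2) 0 = 4/5 := rfl
    have e1 : (!₂[(4:ℝ)/5, σ * (3/5)] : Euc 2) 1 = σ * (3/5) := rfl
    rw [e0, e1]
    have : ((4:ℝ)/5) ^ 2 + (σ * (3/5)) ^ 2 = 1 := by nlinarith
    rw [this, Real.sqrt_one]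
  · show σ * (3/5) ≠ 0
    exact mul_ne_zero hσ0 (by norm_num)

/-- point constructor pinning the `EuclideanSpace` instances -/
def pt (a b : ℝ) : Euc 2 := !₂[a, b]

lemma circpt_mem_ball {σ : ℝ} (hσ : σ = 1 ∨ σ = -1) :
    pt (4/5) (σ * (3/5)) ∈ ball (pt 1 0) 1 := by
  have hσ2 : σ ^ 2 = 1 := by rcases hσ with h | h <;> rw [h] <;> norm_num
  rw [mem_ball, euc2_dist]
  have e0 : pt (4/5) (σ * (3/5)) 0 = 4/5 := rfl
  have e1 : pt (4/5) (σ * (3/5)) 1 = σ * (3/5) := rfl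
  have f0 : pt 1 0 0 = 1 := rfl
  have f1 : pt 1 0 1 = (0:ℝ) := rfl
  rw [e0, e1, f0, f1]
  have : ((4:ℝ)/5 - 1) ^ 2 + (σ * (3/5) - 0) ^ 2 = 2/5 := by nlinarith
  rw [this]
  calc Real.sqrt (2/5) < Real.sqrt 1 := Real.sqrt_lt_sqrt (by norm_num) (by norm_num)
  _ = 1 := Real.sqrt_one

lemma diam_frontier_gt_one : ENNReal.ofReal 1 < EMetric.diam (frontier cutDisc) := by
  have h1 : pt 1 0 ∈ frontier cutDisc := tip_mem_frontier (Or.inl rfl)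
  have h2 : pt (-1) 0 ∈ frontier cutDisc := tip_mem_frontier (Or.inr rfl)
  have hd : edist (pt 1 0) (pt (-1) 0) = ENNReal.ofReal 2 := by
    rw [edist_dist, euc2_dist]
    have e0 : pt 1 0 0 = (1:ℝ) := rfl
    have e1 : pt 1 0 1 = (0:ℝ) := rfl
    have f0 : pt (-1) 0 0 = (-1:ℝ) := rfl
    have f1 : pt (-1) 0 1 = (0:ℝ) := rfl
    rw [e0, e1, f0, f1]
    have : ((1:ℝ) - -1) ^ 2 + ((0:ℝ) - 0) ^ 2 = 4 := by norm_num
    rw [this, show (4:ℝ) = 2 ^ 2 by norm_num, Real.sqrt_sq (by norm_num)]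
  calc ENNReal.ofReal 1 < ENNReal.ofReal 2 := by
        rw [ENNReal.ofReal_lt_ofReal_iff (by norm_num)]; norm_num
  _ = edist (pt 1 0) (pt (-1) 0) := hd.symm
  _ ≤ EMetric.diam (frontier cutDisc) := EMetric.edist_le_diam_of_mem h1 h2

/-- **Example 3.3 (3).** `Ω₃` satisfies the weak local John condition for some `D₀ ≥ 1`, but
satisfies neither the John condition nor the local John condition for any `D₀ ≥ 1`. -/
theorem cutDisc_weakLocalJohn_not_john_not_localJohn :
    (∃ D₀ : ℝ, 1 ≤ D₀ ∧ WeakLocalJohnWith 1 cutDisc D₀) ∧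
    ∀ D₀ : ℝ, 1 ≤ D₀ → ¬ JohnWith cutDisc D₀ ∧ ¬ LocalJohnWith cutDisc D₀ := by
  constructor
  · -- weak local John with D₀ = 2, θ = 1/2, R = 2
    refine ⟨2, by norm_num, 1/2, by norm_num, by norm_num, 2, le_refl 2, ?_⟩
    intro X hX
    have hX1 : X 1 ≠ 0 := (mem_cutDisc.1 hX).2
    rcases lt_or_ge 0 (X 1) with hpos | hle
    · -- upper half: s = 1
      have hs : (1:ℝ) = 1 ∨ (1:ℝ) = -1 := Or.inl rfl
      have hsX : 0 < (1:ℝ) * X 1 := by rwa [one_mul]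
      refine ⟨(ball X (2 * infDist X (frontier cutDisc)) ∩ frontier cutDisc) ∩
        {z : Euc 2 | 0 ≤ (1:ℝ) * z 1}, ?_, inter_subset_left, measure_half hX hs hsX, ?_⟩
      · exact (measurableSet_ball.inter isClosed_frontier.measurableSet).inter
          (isClosed_le continuous_const (continuous_const.mul cont_coord1)).measurableSet
      · rintro z ⟨⟨hzb, hzf⟩, hz1⟩
        exact nt_path hX hs hsX hzf hz1 (mem_ball.1 hzb)
    · -- lower half: s = -1
      have hs : (-1:ℝ) = 1 ∨ (-1:ℝ) = -1 := Or.inr rfl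
      have hsX : 0 < (-1:ℝ) * X 1 := by
        have : X 1 < 0 := lt_of_le_of_ne hle hX1
        nlinarith
      refine ⟨(ball X (2 * infDist X (frontier cutDisc)) ∩ frontier cutDisc) ∩
        {z : Euc 2 | 0 ≤ (-1:ℝ) * z 1}, ?_, inter_subset_left, measure_half hX hs hsX, ?_⟩
      · exact (measurableSet_ball.inter isClosed_frontier.measurableSet).inter
          (isClosed_le continuous_const (continuous_const.mul cont_coord1)).measurableSet
      · rintro z ⟨⟨hzb, hzf⟩, hz1⟩
        exact nt_path hX hs hsX hzf hz1 (mem_ball.1 hzb)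
  · intro D₀ _
    constructor
    · -- not John
      rintro ⟨X₀, hX₀, hpath⟩
      have hX₀1 : X₀ 1 ≠ 0 := (mem_cutDisc.1 hX₀).2
      rcases lt_or_ge 0 (X₀ 1) with hpos | hle
      · obtain ⟨γ, ⟨⟨hcont, _, hmem⟩, _⟩, hγ0, hγ1⟩ :=
          hpath (!₂[(0:ℝ), (-1) / 2] : Euc 2) (halfpt_mem (Or.inr rfl))
        apply no_cross hcont hmem
        · rw [hγ0]; show (-1:ℝ) / 2 ≠ 0; norm_num
        · rw [hγ0, hγ1]
          show (-1:ℝ) / 2 * X₀ 1 < 0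
          nlinarith
      · have hneg : X₀ 1 < 0 := lt_of_le_of_ne hle hX₀1
        obtain ⟨γ, ⟨⟨hcont, _, hmem⟩, _⟩, hγ0, hγ1⟩ :=
          hpath (!₂[(0:ℝ), 1 / 2] : Euc 2) (halfpt_mem (Or.inl rfl))
        apply no_cross hcont hmem
        · rw [hγ0]; show (1:ℝ) / 2 ≠ 0; norm_num
        · rw [hγ0, hγ1]
          show (1:ℝ) / 2 * X₀ 1 < 0
          nlinarith
    · -- not local John
      intro hLJ
      obtain ⟨Y, ⟨_, hYΩ⟩, _, hzpath⟩ :=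
        hLJ (pt 1 0) (tip_mem_frontier (Or.inl rfl)) 1 one_pos diam_frontier_gt_one
      have hY1 : Y 1 ≠ 0 := (mem_cutDisc.1 hYΩ).2
      rcases lt_or_ge 0 (Y 1) with hpos | hle
      · obtain ⟨γ, ⟨⟨hcont, _, hmem⟩, _⟩, hγ0, hγ1, _⟩ :=
          hzpath (pt (4/5) ((-1) * (3/5)))
            ⟨circpt_mem_ball (Or.inr rfl), circpt_mem_frontier (Or.inr rfl)⟩
        apply no_cross hcont hmem
        · rw [hγ0]; show (-1:ℝ) * (3/5) ≠ 0; norm_num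
        · rw [hγ0, hγ1]
          show (-1:ℝ) * (3/5) * Y 1 < 0
          nlinarith
      · have hneg : Y 1 < 0 := lt_of_le_of_ne hle hY1
        obtain ⟨γ, ⟨⟨hcont, _, hmem⟩, _⟩, hγ0, hγ1, _⟩ :=
          hzpath (pt (4/5) (1 * (3/5)))
            ⟨circpt_mem_ball (Or.inl rfl), circpt_mem_frontier (Or.inl rfl)⟩
        apply no_cross hcont hmem
        · rw [hγ0]; show (1:ℝ) * (3/5) ≠ 0; norm_num
        · rw [hγ0, hγ1]
          show (1:ℝ) * (3/5) * Y 1 < 0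
          nlinarith
end
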